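/- Let n ≥ 2, ℓ ≥ 1, let t be an integer with 1 ≤ t ≤ ℓ, and let v₁,…,vₙ : Fin ℓ → ℝ be binary vectors. For each i define Aᵢ = (∑_{j ≠ i} n^{3(⟨vᵢ,vⱼ⟩+1)} · (∑_t vⱼ t)) / (∑_{k ≠ i} n^{3(⟨vᵢ,vₖ⟩+1)} + n^{3(t+1)}), where n^x denotes the real power of n. Then: (a) if there exist i ≠ j with ⟨vᵢ, vⱼ⟩ ≥ t, there exists i with Aᵢ ≥ 1/(n+1); and (b) if ⟨vᵢ, vⱼ⟩ ≤ t − 1 for all i ≠ j, then Aᵢ ≤ ℓ/n² for every i; in particular, if additionally ℓ · (n+1)^{1.5} < n², then Aᵢ < 1/(n+1)^{1.5} for every i. -/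
import Mathlib


open Finset

/-- The yes/no gap of the attention entries in the construction showing a single
attention unit with input and output MLPs solves `Max-IP_{n,ℓ,t}`. -/
theorem stmt8 (n ℓ t : ℕ) (hn : 2 ≤ n) (hℓ : 1 ≤ ℓ) (ht1 : 1 ≤ t) (ht2 : t ≤ ℓ)
    (v : Fin n → Fin ℓ → ℝ)
    (hbin : ∀ i s, v i s = 0 ∨ v i s = 1)
    (A : Fin n → ℝ)
    (hA : ∀ i, A i =
      (∑ j ∈ Finset.univ.erase i,
          (n : ℝ) ^ (3 * ((∑ s, v i s * v j s) + 1)) * (∑ s, v j s)) /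
        ((∑ k ∈ Finset.univ.erase i, (n : ℝ) ^ (3 * ((∑ s, v i s * v k s) + 1))) +
          (n : ℝ) ^ (3 * ((t : ℝ) + 1)))) :
    ((∃ i j : Fin n, i ≠ j ∧ (t : ℝ) ≤ ∑ s, v i s * v j s) →
      ∃ i, 1 / ((n : ℝ) + 1) ≤ A i) ∧
    ((∀ i j : Fin n, i ≠ j → (∑ s, v i s * v j s) ≤ (t : ℝ) - 1) →
      (∀ i, A i ≤ (ℓ : ℝ) / (n : ℝ) ^ 2) ∧
      ((ℓ : ℝ) * ((n : ℝ) + 1) ^ (1.5 : ℝ) < (n : ℝ) ^ 2 →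
        ∀ i, A i < 1 / ((n : ℝ) + 1) ^ (1.5 : ℝ))) := by
  have hn1 : (1:ℝ) < n := by exact_mod_cast hn
  have hn0 : (0:ℝ) < n := lt_trans one_pos hn1
  have hn2 : (2:ℝ) ≤ n := by exact_mod_cast hn
  have hv0 : ∀ i s, 0 ≤ v i s := fun i s => by rcases hbin i s with h|h <;> simp [h]
  have hv1 : ∀ i s, v i s ≤ 1 := fun i s => by rcases hbin i s with h|h <;> simp [h]
  have hS0 : ∀ i j : Fin n, 0 ≤ ∑ s, v i s * v j s := fun i j =>
    Finset.sum_nonneg fun s _ => mul_nonneg (hv0 i s) (hv0 j s)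
  have hSσ : ∀ i j : Fin n, (∑ s, v i s * v j s) ≤ ∑ s, v j s := fun i j =>
    Finset.sum_le_sum fun s _ => by
      calc v i s * v j s ≤ 1 * v j s := mul_le_mul_of_nonneg_right (hv1 i s) (hv0 j s)
        _ = v j s := one_mul _
  have hσℓ : ∀ j : Fin n, (∑ s, v j s) ≤ ℓ := fun j => by
    calc (∑ s, v j s) ≤ ∑ _s : Fin ℓ, (1:ℝ) := Finset.sum_le_sum fun s _ => hv1 j s
      _ = ℓ := by simp
  have hσ0 : ∀ j : Fin n, 0 ≤ ∑ s, v j s := fun j => Finset.sum_nonneg fun s _ => hv0 j s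
  have hDpos : ∀ i, 0 < (∑ k ∈ Finset.univ.erase i, (n : ℝ) ^ (3 * ((∑ s, v i s * v k s) + 1))) +
          (n : ℝ) ^ (3 * ((t : ℝ) + 1)) := fun i =>
    add_pos_of_nonneg_of_pos
      (Finset.sum_nonneg fun k _ => (Real.rpow_pos_of_pos hn0 _).le)
      (Real.rpow_pos_of_pos hn0 _)
  have hcard : ∀ i : Fin n, ((Finset.univ.erase i).card : ℝ) = (n:ℝ) - 1 := fun i => by
    rw [Finset.card_erase_of_mem (Finset.mem_univ i), Finset.card_univ, Fintype.card_fin]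
    have : 1 ≤ n := le_trans (by norm_num) hn
    push_cast [this]
    ring
  constructor
  · rintro ⟨i0, j0, hij0, ht0⟩
    obtain ⟨⟨i, j⟩, hmem, hmax⟩ := Finset.exists_max_image (Finset.univ.offDiag)
      (fun p => ∑ s, v p.1 s * v p.2 s) ⟨(i0, j0), by simp [Finset.mem_offDiag, hij0]⟩
    rw [Finset.mem_offDiag] at hmem
    have hij : i ≠ j := hmem.2.2
    set m : ℝ := ∑ s, v i s * v j s with hm
    have htm : (t:ℝ) ≤ m :=
      le_trans ht0 (hmax (i0,j0) (by simp [Finset.mem_offDiag, hij0]))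
    refine ⟨i, ?_⟩
    rw [hA i, div_le_div_iff₀ (by positivity) (hDpos i)]
    set P : ℝ := (n:ℝ) ^ (3 * (m + 1)) with hP
    have hPpos : 0 < P := Real.rpow_pos_of_pos hn0 _
    have hsum : (∑ k ∈ Finset.univ.erase i, (n : ℝ) ^ (3 * ((∑ s, v i s * v k s) + 1)))
        ≤ ((n:ℝ) - 1) * P := by
      calc (∑ k ∈ Finset.univ.erase i, (n : ℝ) ^ (3 * ((∑ s, v i s * v k s) + 1)))
          ≤ ∑ _k ∈ Finset.univ.erase i, P := by
            refine Finset.sum_le_sum fun k hk => ?_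
            have hk' : k ≠ i := (Finset.mem_erase.mp hk).1
            have : (∑ s, v i s * v k s) ≤ m :=
              hmax (i, k) (by simp [Finset.mem_offDiag, hk'.symm])
            exact (Real.rpow_le_rpow_left_iff hn1).mpr (by linarith)
        _ = ((n:ℝ) - 1) * P := by rw [Finset.sum_const, nsmul_eq_mul, hcard i]
    have htP : (n : ℝ) ^ (3 * ((t : ℝ) + 1)) ≤ P :=
      (Real.rpow_le_rpow_left_iff hn1).mpr (by linarith)
    have hNP : P ≤ ∑ j' ∈ Finset.univ.erase i,
        (n : ℝ) ^ (3 * ((∑ s, v i s * v j' s) + 1)) * (∑ s, v j' s) := by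
      have hj : j ∈ Finset.univ.erase i := Finset.mem_erase.mpr ⟨hij.symm, Finset.mem_univ j⟩
      have hσj : (1:ℝ) ≤ ∑ s, v j s := by
        have := hSσ i j; have := hS0 i j
        have ht1' : (1:ℝ) ≤ t := by exact_mod_cast ht1
        linarith
      calc P = P * 1 := (mul_one P).symm
        _ ≤ (n : ℝ) ^ (3 * ((∑ s, v i s * v j s) + 1)) * (∑ s, v j s) := by
            rw [← hm, ← hP]
            exact mul_le_mul_of_nonneg_left hσj hPpos.le
        _ ≤ _ := Finset.single_le_sum (f := fun j' => (n : ℝ) ^ (3 * ((∑ s, v i s * v j' s) + 1)) * (∑ s, v j' s))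
            (fun k _ => mul_nonneg (Real.rpow_pos_of_pos hn0 _).le (hσ0 k)) hj
    nlinarith [hPpos, hNP, hsum, htP]
  · intro hno
    have key : ∀ i, A i ≤ (ℓ : ℝ) / (n : ℝ) ^ 2 := by
      intro i
      rw [hA i, div_le_div_iff₀ (hDpos i) (by positivity)]
      set Q : ℝ := (n:ℝ) ^ (3 * (t:ℝ)) with hQ
      have hQpos : 0 < Q := Real.rpow_pos_of_pos hn0 _
      have hN : (∑ j' ∈ Finset.univ.erase i,
          (n : ℝ) ^ (3 * ((∑ s, v i s * v j' s) + 1)) * (∑ s, v j' s))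
          ≤ ((n:ℝ) - 1) * (Q * ℓ) := by
        calc _ ≤ ∑ _j' ∈ Finset.univ.erase i, Q * (ℓ:ℝ) := by
              refine Finset.sum_le_sum fun k hk => ?_
              have hk' : k ≠ i := (Finset.mem_erase.mp hk).1
              have hle : (∑ s, v i s * v k s) ≤ (t:ℝ) - 1 := hno i k hk'.symm
              refine mul_le_mul ?_ (hσℓ k) (hσ0 k) hQpos.le
              exact (Real.rpow_le_rpow_left_iff hn1).mpr (by linarith)
          _ = ((n:ℝ) - 1) * (Q * ℓ) := by rw [Finset.sum_const, nsmul_eq_mul, hcard i]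
      have hD : Q * (n:ℝ)^(3:ℕ) ≤ (∑ k ∈ Finset.univ.erase i,
          (n : ℝ) ^ (3 * ((∑ s, v i s * v k s) + 1))) + (n : ℝ) ^ (3 * ((t : ℝ) + 1)) := by
        have : (n : ℝ) ^ (3 * ((t : ℝ) + 1)) = Q * (n:ℝ)^(3:ℕ) := by
          rw [hQ, ← Real.rpow_natCast (n:ℝ) 3, ← Real.rpow_add hn0]
          norm_num
          ring_nf
        rw [← this]
        exact le_add_of_nonneg_left (Finset.sum_nonneg fun k _ => (Real.rpow_pos_of_pos hn0 _).le)
      have hℓ0 : (0:ℝ) ≤ ℓ := by positivity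
      nlinarith [hQpos, hN, hD, mul_nonneg hQpos.le hℓ0, sq_nonneg ((n:ℝ))]
    refine ⟨key, fun hcond i => ?_⟩
    have h15 : (0:ℝ) < ((n:ℝ) + 1) ^ (1.5:ℝ) := Real.rpow_pos_of_pos (by linarith) _
    have : (ℓ:ℝ) / (n:ℝ)^2 < 1 / ((n:ℝ) + 1) ^ (1.5:ℝ) := by
      rw [div_lt_div_iff₀ (by positivity) h15]
      linarith
    exact lt_of_le_of_lt (key i) this
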